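/- Let d_A, d_D ≥ 1 and let ρ be a density matrix on ℂ^{d_A} ⊗ ℂ^{d_D} (entries indexed by pairs (a,d) ∈ [d_A]×[d_D]). Let ρ_D be the partial trace of ρ over the first factor, and let ρ_D^{−1} denote the generalized (Moore–Penrose) inverse of ρ_D. Then tr(ρ²·(I_{d_A} ⊗ ρ_D^{−1})) ≤ d_A. -/

import Mathlib

open scoped ComplexOrder Matrix Kronecker

/-- The generalized (Moore–Penrose) inverse of a Hermitian matrix, defined via its spectral
decomposition: `σ⁻¹ = ∑_{k : μ_k ≠ 0} μ_k⁻¹ |w_k⟩⟨w_k|`. (Junk value `0` if the matrix fails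
to be Hermitian; for Hermitian matrices this agrees with the Moore–Penrose inverse.) -/
noncomputable def pinvH {N : Type*} [Fintype N] [DecidableEq N] (σ : Matrix N N ℂ) :
    Matrix N N ℂ :=
  if h : σ.IsHermitian then
    ∑ k ∈ Finset.univ.filter (fun k => h.eigenvalues k ≠ 0),
      ((h.eigenvalues k)⁻¹ : ℝ) •
        Matrix.of (fun i j => (h.eigenvectorBasis k) i * star ((h.eigenvectorBasis k) j))
  else 0

/-- The partial trace over the first tensor factor of a matrix on `ℂ^{d_A} ⊗ ℂ^{d_D}`. -/
noncomputable def ptrFst {dA dD : ℕ} (ρ : Matrix (Fin dA × Fin dD) (Fin dA × Fin dD) ℂ) :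
    Matrix (Fin dD) (Fin dD) ℂ :=
  Matrix.of fun d₁ d₂ => ∑ a : Fin dA, ρ (a, d₁) (a, d₂)


open scoped MatrixOrder in
lemma psd_herm_sqrt {n : Type*} [Fintype n] [DecidableEq n] {A : Matrix n n ℂ}
    (hA : A.PosSemidef) : ∃ R : Matrix n n ℂ, Rᴴ = R ∧ R * R = A :=
  ⟨CFC.sqrt A, (Matrix.nonneg_iff_posSemidef.mp (CFC.sqrt_nonneg A)).1,
    CFC.sqrt_mul_sqrt_self A (Matrix.nonneg_iff_posSemidef.mpr hA)⟩

lemma psd_eq_ctm {n : Type*} [Fintype n] [DecidableEq n] {A : Matrix n n ℂ}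
    (hA : A.PosSemidef) : ∃ C : Matrix n n ℂ, A = Cᴴ * C := by
  obtain ⟨R, hRh, hRR⟩ := psd_herm_sqrt hA
  exact ⟨R, by rw [hRh, hRR]⟩

section Aux
variable {n : Type*} [Fintype n]

lemma trace_nonneg_of_psd [DecidableEq n] {M : Matrix n n ℂ} (hM : M.PosSemidef) : 0 ≤ M.trace := by
  refine Finset.sum_nonneg fun i _ => ?_
  simpa [dotProduct, Pi.single_apply] using hM.dotProduct_mulVec_nonneg (Pi.single i 1)

lemma trace_mul_nonneg [DecidableEq n] {A B : Matrix n n ℂ}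
    (hA : A.PosSemidef) (hB : B.PosSemidef) : 0 ≤ (A * B).trace := by
  obtain ⟨C, rfl⟩ := psd_eq_ctm hB
  rw [← Matrix.mul_assoc, Matrix.trace_mul_cycle]
  exact trace_nonneg_of_psd (hA.mul_mul_conjTranspose_same C)

lemma psd_trace_zero [DecidableEq n] {A : Matrix n n ℂ} (hA : A.PosSemidef)
    (h : A.trace = 0) : A = 0 := by
  obtain ⟨C, rfl⟩ := psd_eq_ctm hA
  suffices hC : C = 0 by simp [hC]
  have h2 : ∑ j, ∑ i, Complex.normSq (C i j) = 0 := by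
    have : (Matrix.trace (Cᴴ * C)) = ((∑ j, ∑ i, Complex.normSq (C i j) : ℝ) : ℂ) := by
      simp only [Matrix.trace, Matrix.diag, Matrix.mul_apply, Matrix.conjTranspose_apply]
      push_cast
      congr 1; ext j; congr 1; ext i
      rw [Complex.star_def, ← Complex.normSq_eq_conj_mul_self]
    rw [this] at h
    exact_mod_cast h
  ext i j
  have := (Finset.sum_eq_zero_iff_of_nonneg (fun j _ => Finset.sum_nonneg
    (fun i _ => Complex.normSq_nonneg (C i j)))).mp h2 j (Finset.mem_univ j)
  have := (Finset.sum_eq_zero_iff_of_nonneg (fun i _ => Complex.normSq_nonneg (C i j))).mp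
    this i (Finset.mem_univ i)
  simpa using Complex.normSq_eq_zero.mp this

lemma psd_smul {M : Matrix n n ℂ} (hM : M.PosSemidef) {r : ℝ} (hr : 0 ≤ r) :
    ((r : ℂ) • M).PosSemidef := by
  refine Matrix.PosSemidef.of_dotProduct_mulVec_nonneg ?_ ?_
  · unfold Matrix.IsHermitian
    rw [Matrix.conjTranspose_smul, hM.1.eq, Complex.star_def, Complex.conj_ofReal]
  · intro x
    rw [Matrix.smul_mulVec, dotProduct_smul]
    exact mul_nonneg (by exact_mod_cast hr) (hM.dotProduct_mulVec_nonneg x)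
end Aux


section Kron
variable {dA dD : ℕ}

local notation "K" M => (1 : Matrix (Fin dA) (Fin dA) ℂ) ⊗ₖ M

lemma kron_mul (M N : Matrix (Fin dD) (Fin dD) ℂ) :
    (K M) * (K N) = K (M * N) := by
  rw [← Matrix.mul_kronecker_mul, one_mul]

lemma kron_sub (M N : Matrix (Fin dD) (Fin dD) ℂ) :
    (K (M - N)) = (K M) - (K N) := by
  ext ⟨a, d⟩ ⟨a', d'⟩
  simp [Matrix.kroneckerMap_apply, Matrix.sub_apply, mul_sub]

lemma kron_smul (z : ℂ) (M : Matrix (Fin dD) (Fin dD) ℂ) :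
    (K (z • M)) = z • (K M) := by
  ext ⟨a, d⟩ ⟨a', d'⟩
  simp only [Matrix.kroneckerMap_apply, Matrix.smul_apply, smul_eq_mul]
  ring

lemma kron_psd {M : Matrix (Fin dD) (Fin dD) ℂ} (hM : M.PosSemidef) :
    Matrix.PosSemidef (K M) := by
  refine Matrix.PosSemidef.of_dotProduct_mulVec_nonneg ?_ ?_
  · ext ⟨a, d⟩ ⟨a', d'⟩
    simp only [Matrix.conjTranspose_apply, Matrix.kroneckerMap_apply, star_mul',
      hM.1.apply]
    congr 1
    rcases eq_or_ne a a' with rfl | hne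
    · simp
    · simp [Matrix.one_apply, hne, Ne.symm hne]
  · intro x
    have key : star x ⬝ᵥ ((K M) *ᵥ x)
        = ∑ a : Fin dA, star (fun d => x (a, d)) ⬝ᵥ (M *ᵥ fun d => x (a, d)) := by
      simp only [dotProduct, Matrix.mulVec, Fintype.sum_prod_type,
        Matrix.kroneckerMap_apply, Matrix.one_apply, Pi.star_apply]
      refine Finset.sum_congr rfl fun a _ => Finset.sum_congr rfl fun d _ => ?_
      congr 1
      rw [Finset.sum_comm]
      simp [ite_mul]
    rw [key]
    exact Finset.sum_nonneg fun a _ => hM.dotProduct_mulVec_nonneg _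
end Kron

lemma spectral_package {N : Type*} [Fintype N] [DecidableEq N] {σ : Matrix N N ℂ}
    (hσ : σ.PosSemidef) :
    ∃ T P : Matrix N N ℂ, T.PosSemidef ∧ T * T = pinvH σ ∧ T * σ * T = P
      ∧ P * P = P ∧ σ * P = σ ∧ (1 - P).PosSemidef := by
  have h : σ.IsHermitian := hσ.1
  set U : Matrix N N ℂ := (Matrix.IsHermitian.eigenvectorUnitary h : Matrix N N ℂ) with hUdef
  set μ : N → ℝ := h.eigenvalues with hμdef
  have hμ : ∀ k, 0 ≤ μ k := fun k => hσ.eigenvalues_nonneg k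
  have hU1 : star U * U = 1 :=
    Matrix.mem_unitaryGroup_iff'.mp (Matrix.IsHermitian.eigenvectorUnitary h).2
  have hU2 : U * star U = 1 :=
    Matrix.mem_unitaryGroup_iff.mp (Matrix.IsHermitian.eigenvectorUnitary h).2
  set cf : (N → ℝ) → Matrix N N ℂ :=
    fun f => U * Matrix.diagonal (fun k => (f k : ℂ)) * star U with hcf
  have cf_congr : ∀ f g : N → ℝ, (∀ k, f k = g k) → cf f = cf g :=
    fun f g hfg => congrArg cf (funext hfg)
  have key : ∀ (D E : Matrix N N ℂ), (U*D*star U)*(U*E*star U) = U*(D*E)*star U := by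
    intro D E
    calc (U*D*star U)*(U*E*star U) = U*(D*((star U*U)*(E*star U))) := by noncomm_ring
    _ = U*(D*E)*star U := by rw [hU1]; noncomm_ring
  have cf_mul : ∀ f g, cf f * cf g = cf (fun k => f k * g k) := by
    intro f g
    simp only [hcf]
    rw [key, Matrix.diagonal_mul_diagonal]
    congr 1
    congr 1
    congr 1
    funext k
    push_cast
    rfl
  have cf_psd : ∀ f, (∀ k, 0 ≤ f k) → (cf f).PosSemidef := by
    intro f hf
    have hd0 : (0 : N → ℂ) ≤ fun k => (f k : ℂ) := by
      intro k
      simpa using Complex.zero_le_real.mpr (hf k)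
    have hd : Matrix.PosSemidef (Matrix.diagonal (fun k => (f k : ℂ))) :=
      Matrix.PosSemidef.diagonal hd0
    simpa [hcf, Matrix.star_eq_conjTranspose] using hd.mul_mul_conjTranspose_same U
  have cf_sub : ∀ f g, cf (fun k => f k - g k) = cf f - cf g := by
    intro f g
    simp only [hcf]
    rw [show Matrix.diagonal (fun k => ((f k - g k : ℝ) : ℂ))
        = Matrix.diagonal (fun k => ((f k : ℝ) : ℂ)) - Matrix.diagonal (fun k => ((g k : ℝ) : ℂ)) by
      rw [Matrix.diagonal_sub]; congr 1; funext k; push_cast; rfl]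
    noncomm_ring
  have cf_one : cf (fun _ => 1) = 1 := by
    simp only [hcf]
    push_cast
    rw [Matrix.diagonal_one, Matrix.mul_one, hU2]
  have hσeq : σ = cf μ := h.spectral_theorem
  have hpinv : pinvH σ = cf (fun k => (μ k)⁻¹) := by
    rw [pinvH, dif_pos h]
    have hext : ∑ k ∈ Finset.univ.filter (fun k => h.eigenvalues k ≠ 0),
        ((h.eigenvalues k)⁻¹ : ℝ) •
          Matrix.of (fun i j => (h.eigenvectorBasis k) i * star ((h.eigenvectorBasis k) j))
        = ∑ k : N, ((μ k)⁻¹ : ℝ) •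
          Matrix.of (fun i j => (h.eigenvectorBasis k) i * star ((h.eigenvectorBasis k) j)) := by
      refine Finset.sum_subset (Finset.filter_subset _ _) (fun k _ hk => ?_)
      simp only [Finset.mem_filter, Finset.mem_univ, true_and, not_not] at hk
      simp [hk]
    rw [hext]
    ext i j
    simp only [Matrix.sum_apply, Matrix.smul_apply, Matrix.of_apply, hcf, Matrix.mul_apply,
      Matrix.star_apply, Matrix.IsHermitian.eigenvectorUnitary_apply, Matrix.diagonal_apply,
      mul_ite, ite_mul, mul_zero, zero_mul, Finset.sum_ite_eq, Finset.sum_ite_eq',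
      Finset.mem_univ, if_true]
    refine Finset.sum_congr rfl fun k _ => ?_
    rw [Complex.real_smul, hUdef, Matrix.IsHermitian.eigenvectorUnitary_apply,
      Matrix.IsHermitian.eigenvectorUnitary_apply]
    show (((μ k)⁻¹ : ℝ) : ℂ) * (h.eigenvectorBasis k i * star (h.eigenvectorBasis k j))
        = h.eigenvectorBasis k i * (((μ k)⁻¹ : ℝ) : ℂ) * star (h.eigenvectorBasis k j)
    ring
  refine ⟨cf (fun k => (Real.sqrt (μ k))⁻¹), cf (fun k => (μ k)⁻¹ * μ k),
    cf_psd _ (fun k => by positivity), ?_, ?_, ?_, ?_, ?_⟩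
  · rw [cf_mul, hpinv]
    refine cf_congr _ _ fun k => ?_
    rw [← mul_inv, Real.mul_self_sqrt (hμ k)]
  · rw [hσeq, cf_mul, cf_mul]
    refine cf_congr _ _ fun k => ?_
    rw [mul_right_comm, ← mul_inv, Real.mul_self_sqrt (hμ k), mul_comm]
  · rw [cf_mul]
    refine cf_congr _ _ fun k => ?_
    rcases eq_or_ne (μ k) 0 with h0 | h0
    · simp [h0]
    · field_simp
  · rw [hσeq, cf_mul]
    refine cf_congr _ _ fun k => ?_
    rcases eq_or_ne (μ k) 0 with h0 | h0
    · simp [h0]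
    · field_simp
  · rw [← cf_one, ← cf_sub]
    refine cf_psd _ (fun k => ?_)
    rcases eq_or_ne (μ k) 0 with h0 | h0
    · simp [h0]
    · simp [inv_mul_cancel₀ h0]

section StepA

variable {dA dD : ℕ}

lemma sum_mulVec' {ι n m : Type*} [Fintype ι] [Fintype n] (f : ι → Matrix m n ℂ) (v : n → ℂ) :
    (∑ i, f i) *ᵥ v = ∑ i, (f i) *ᵥ v := by
  ext j
  simp only [Matrix.mulVec, dotProduct, Finset.sum_apply, Matrix.sum_apply,
    Finset.sum_mul]
  rw [Finset.sum_comm]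

lemma dotProduct_sum' {ι n : Type*} [Fintype ι] [Fintype n] (v : n → ℂ) (w : ι → n → ℂ) :
    v ⬝ᵥ (∑ i, w i) = ∑ i, v ⬝ᵥ (w i) := by
  simp only [dotProduct, Finset.sum_apply, Finset.mul_sum]
  rw [Finset.sum_comm]

lemma dot_star_self {n : Type*} [Fintype n] (y : n → ℂ) :
    star y ⬝ᵥ y = ((∑ i, Complex.normSq (y i) : ℝ) : ℂ) := by
  simp only [dotProduct, Pi.star_apply]
  push_cast
  refine Finset.sum_congr rfl fun i _ => ?_
  rw [Complex.star_def, ← Complex.normSq_eq_conj_mul_self]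

lemma kron_qf {M : Matrix (Fin dD) (Fin dD) ℂ} (x : Fin dA × Fin dD → ℂ) :
    star x ⬝ᵥ (((1 : Matrix (Fin dA) (Fin dA) ℂ) ⊗ₖ M) *ᵥ x)
      = ∑ a : Fin dA, star (fun d => x (a, d)) ⬝ᵥ (M *ᵥ fun d => x (a, d)) := by
  simp only [dotProduct, Matrix.mulVec, Fintype.sum_prod_type,
    Matrix.kroneckerMap_apply, Matrix.one_apply, Pi.star_apply]
  refine Finset.sum_congr rfl fun a _ => Finset.sum_congr rfl fun d _ => ?_
  congr 1
  rw [Finset.sum_comm]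
  simp [ite_mul]

lemma normSq_sum_le (z : Fin dA → ℂ) :
    Complex.normSq (∑ a, z a) ≤ dA * ∑ a, Complex.normSq (z a) := by
  have h1 : ‖∑ a, z a‖ ≤ ∑ a, ‖z a‖ := by
    simpa using norm_sum_le Finset.univ z
  have h2 : ‖∑ a, z a‖ ^ 2 ≤ (∑ a, ‖z a‖) ^ 2 :=
    pow_le_pow_left₀ (norm_nonneg _) h1 2
  have h3 : (∑ a, ‖z a‖) ^ 2
      ≤ (Finset.univ.card : ℝ) * ∑ a, ‖z a‖ ^ 2 :=
    sq_sum_le_card_mul_sum_sq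
  calc Complex.normSq (∑ a, z a) = ‖∑ a, z a‖ ^ 2 := (Complex.sq_norm _).symm
  _ ≤ (Finset.univ.card : ℝ) * ∑ a, ‖z a‖ ^ 2 := le_trans h2 h3
  _ = dA * ∑ a, Complex.normSq (z a) := by
      simp [Complex.sq_norm, Finset.card_univ]

lemma ptrFst_decomp (C : Matrix (Fin dA × Fin dD) (Fin dA × Fin dD) ℂ) :
    ptrFst (Cᴴ * C) = ∑ b : Fin dA,
      (C.submatrix id (Prod.mk b))ᴴ * (C.submatrix id (Prod.mk b)) := by
  ext d₁ d₂
  simp only [ptrFst, Matrix.of_apply, Matrix.mul_apply, Matrix.sum_apply,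
    Matrix.conjTranspose_apply, Matrix.submatrix_apply, id]

lemma key_psd {ρ : Matrix (Fin dA × Fin dD) (Fin dA × Fin dD) ℂ} (hρ : ρ.PosSemidef)
    (hσ : (ptrFst ρ).PosSemidef) :
    Matrix.PosSemidef ((dA : ℂ) • ((1 : Matrix (Fin dA) (Fin dA) ℂ) ⊗ₖ ptrFst ρ) - ρ) := by
  obtain ⟨C, hC⟩ := psd_eq_ctm hρ
  refine Matrix.PosSemidef.of_dotProduct_mulVec_nonneg ?_ ?_
  · have h1 : ((1 : Matrix (Fin dA) (Fin dA) ℂ) ⊗ₖ ptrFst ρ).PosSemidef := kron_psd hσ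
    have h2 : ((dA : ℂ) • ((1 : Matrix (Fin dA) (Fin dA) ℂ) ⊗ₖ ptrFst ρ)).PosSemidef := by
      have := psd_smul h1 (Nat.cast_nonneg (α := ℝ) dA)
      simpa using this
    exact h2.1.sub hρ.1
  · intro x
    rw [Matrix.sub_mulVec, dotProduct_sub, Matrix.smul_mulVec,
      dotProduct_smul, sub_nonneg]
    set g : Fin dA → Fin dA → (Fin dA × Fin dD) → ℂ :=
      fun a b => (C.submatrix id (Prod.mk b)) *ᵥ (fun d => x (a, d)) with hg
    have hQρ : star x ⬝ᵥ (ρ *ᵥ x)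
        = ((∑ y, Complex.normSq (∑ b, g b b y) : ℝ) : ℂ) := by
      rw [hC, ← Matrix.mulVec_mulVec, Matrix.dotProduct_mulVec, ← Matrix.star_mulVec,
        dot_star_self]
      congr 1
      refine Finset.sum_congr rfl fun y _ => ?_
      congr 1
      simp only [hg, Matrix.mulVec, dotProduct, Fintype.sum_prod_type,
        Matrix.submatrix_apply, id]
    have hQY : star x ⬝ᵥ (((1 : Matrix (Fin dA) (Fin dA) ℂ) ⊗ₖ ptrFst ρ) *ᵥ x)
        = ((∑ a, ∑ b, ∑ y, Complex.normSq (g a b y) : ℝ) : ℂ) := by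
      rw [kron_qf]
      push_cast
      refine Finset.sum_congr rfl fun a _ => ?_
      rw [hC, ptrFst_decomp, sum_mulVec', dotProduct_sum']
      refine Finset.sum_congr rfl fun b _ => ?_
      rw [← Matrix.mulVec_mulVec, Matrix.dotProduct_mulVec, ← Matrix.star_mulVec,
        dot_star_self]
      push_cast
      rfl
    rw [hQρ, hQY]
    rw [show ((dA : ℂ) = ((dA : ℝ) : ℂ)) from by push_cast; rfl]
    rw [smul_eq_mul, ← Complex.ofReal_mul, Complex.real_le_real]
    calc ∑ y, Complex.normSq (∑ b, g b b y)
        ≤ ∑ y, (dA : ℝ) * ∑ b, Complex.normSq (g b b y) :=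
          Finset.sum_le_sum fun y _ => normSq_sum_le _
      _ = (dA : ℝ) * ∑ b, ∑ y, Complex.normSq (g b b y) := by
          rw [← Finset.mul_sum, Finset.sum_comm]
      _ ≤ (dA : ℝ) * ∑ a, ∑ b, ∑ y, Complex.normSq (g a b y) := by
          refine mul_le_mul_of_nonneg_left ?_ (Nat.cast_nonneg dA)
          calc ∑ b, ∑ y, Complex.normSq (g b b y)
              ≤ ∑ b, ∑ a, ∑ y, Complex.normSq (g a b y) :=
                Finset.sum_le_sum fun b _ => Finset.single_le_sum
                  (f := fun a => ∑ y, Complex.normSq (g a b y))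
                  (fun a _ => Finset.sum_nonneg fun y _ => Complex.normSq_nonneg _)
                  (Finset.mem_univ b)
            _ = ∑ a, ∑ b, ∑ y, Complex.normSq (g a b y) := Finset.sum_comm
end StepA


lemma psd_sum {ι n : Type*} [Fintype ι] [Fintype n] {f : ι → Matrix n n ℂ}
    (hf : ∀ i, (f i).PosSemidef) : (∑ i, f i).PosSemidef := by
  refine Matrix.PosSemidef.of_dotProduct_mulVec_nonneg ?_ ?_
  · unfold Matrix.IsHermitian
    rw [Matrix.conjTranspose_sum]
    exact Finset.sum_congr rfl fun i _ => (hf i).1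
  · intro x
    rw [sum_mulVec', dotProduct_sum']
    exact Finset.sum_nonneg fun i _ => (hf i).dotProduct_mulVec_nonneg x

lemma ptrFst_psd {dA dD : ℕ} {ρ : Matrix (Fin dA × Fin dD) (Fin dA × Fin dD) ℂ}
    (hρ : ρ.PosSemidef) : (ptrFst ρ).PosSemidef := by
  obtain ⟨C, rfl⟩ := psd_eq_ctm hρ
  rw [ptrFst_decomp]
  exact psd_sum fun b => Matrix.posSemidef_conjTranspose_mul_self _

/-- For any density matrix `ρ` on `ℂ^{d_A} ⊗ ℂ^{d_D}` with partial trace `ρ_D` over the first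
factor, `tr(ρ²·(I_{d_A} ⊗ ρ_D⁻¹)) ≤ d_A` where `ρ_D⁻¹` is the generalized (Moore–Penrose)
inverse of `ρ_D`. -/
theorem trace_sq_kron_pinv_le (dA dD : ℕ) (hdA : 1 ≤ dA) (hdD : 1 ≤ dD)
    (ρ : Matrix (Fin dA × Fin dD) (Fin dA × Fin dD) ℂ)
    (hρ : ρ.PosSemidef) (hρtr : ρ.trace = 1) :
    (Matrix.trace
        (ρ * ρ * ((1 : Matrix (Fin dA) (Fin dA) ℂ) ⊗ₖ pinvH (ptrFst ρ)))).re ≤ (dA : ℝ) := by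
  set σ := ptrFst ρ with hσdef
  have hσ : σ.PosSemidef := ptrFst_psd hρ
  obtain ⟨T, P, hT, hTT, hTσT, hPP, hσP, h1P⟩ := spectral_package hσ
  set S := (1 : Matrix (Fin dA) (Fin dA) ℂ) ⊗ₖ T with hSdef
  set Q := (1 : Matrix (Fin dA) (Fin dA) ℂ) ⊗ₖ P with hQdef
  set Y := (1 : Matrix (Fin dA) (Fin dA) ℂ) ⊗ₖ σ with hYdef
  have hYpsd : Y.PosSemidef := kron_psd hσ
  have hSpsd : S.PosSemidef := kron_psd hT
  have hSh : Sᴴ = S := hSpsd.1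
  have hQ1 : (1 : Matrix (Fin dA) (Fin dA) ℂ) ⊗ₖ (1 - P) = 1 - Q := by
    rw [kron_sub, Matrix.one_kronecker_one]
  have hQ'psd : (1 - Q).PosSemidef := by rw [← hQ1]; exact kron_psd h1P
  have hQ'h : (1 - Q)ᴴ = 1 - Q := hQ'psd.1
  have hSYS : S * Y * S = Q := by rw [hSdef, hYdef, kron_mul, kron_mul, hTσT]
  have hSS : S * S = (1 : Matrix (Fin dA) (Fin dA) ℂ) ⊗ₖ pinvH σ := by rw [kron_mul, hTT]
  have hYQ' : Y * (1 - Q) = 0 := by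
    rw [← hQ1, hYdef, kron_mul]
    have h0 : σ * (1 - P) = 0 := by rw [Matrix.mul_sub, Matrix.mul_one, hσP, sub_self]
    rw [h0, Matrix.kronecker_zero]
  have hQ'2 : (1 - Q) * (1 - Q) = 1 - Q := by
    have h0 : (1 - P) * (1 - P) = 1 - P := by
      rw [Matrix.sub_mul, Matrix.mul_sub, Matrix.mul_sub, hPP, Matrix.one_mul, Matrix.one_mul,
        Matrix.mul_one]
      abel
    rw [← hQ1, kron_mul, h0]
  have hKey : Matrix.PosSemidef ((dA : ℂ) • Y - ρ) := key_psd hρ hσ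
  have htr0 : (ρ * (1 - Q)).trace = 0 := by
    have hub : ((dA : ℂ) • Y - ρ) * (1 - Q) = -(ρ * (1 - Q)) := by
      rw [Matrix.sub_mul, Matrix.smul_mul, hYQ', smul_zero, zero_sub]
    have h1 : 0 ≤ (((dA : ℂ) • Y - ρ) * (1 - Q)).trace := trace_mul_nonneg hKey hQ'psd
    rw [hub, Matrix.trace_neg] at h1
    have h2 : 0 ≤ (ρ * (1 - Q)).trace := trace_mul_nonneg hρ hQ'psd
    exact le_antisymm (neg_nonneg.mp h1) h2
  have hQρQ : (1 - Q) * ρ * (1 - Q) = 0 := by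
    have hpsd : ((1 - Q) * ρ * (1 - Q)).PosSemidef := by
      have := hρ.conjTranspose_mul_mul_same (1 - Q)
      rwa [hQ'h] at this
    refine psd_trace_zero hpsd ?_
    rw [Matrix.trace_mul_comm, ← Matrix.mul_assoc, hQ'2, Matrix.trace_mul_comm, htr0]
  have hρQ : ρ * Q = ρ := by
    obtain ⟨Rρ, hRρh, hRρ⟩ := psd_herm_sqrt hρ
    have hM : Rρ * (1 - Q) = 0 := by
      apply Matrix.conjTranspose_mul_self_eq_zero.mp
      rw [Matrix.conjTranspose_mul, hQ'h, hRρh, ← Matrix.mul_assoc,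
        Matrix.mul_assoc (1 - Q), hRρ]
      exact hQρQ
    have h0 : ρ * (1 - Q) = 0 := by
      calc ρ * (1 - Q) = Rρ * (Rρ * (1 - Q)) := by
            rw [← Matrix.mul_assoc, hRρ]
        _ = 0 := by rw [hM, Matrix.mul_zero]
    rw [Matrix.mul_sub, Matrix.mul_one] at h0
    exact (sub_eq_zero.mp h0).symm
  set B := S * ρ * S with hBdef
  have hBpsd : B.PosSemidef := by
    have := hρ.conjTranspose_mul_mul_same S
    rwa [hSh] at this
  have hBle : Matrix.PosSemidef ((dA : ℂ) • 1 - B) := by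
    have e2 : S * ((dA : ℂ) • Y) * S = (dA : ℂ) • Q := by
      rw [Matrix.mul_smul, Matrix.smul_mul, hSYS]
    have e : (dA : ℂ) • 1 - B = (dA : ℂ) • (1 - Q) + S * ((dA : ℂ) • Y - ρ) * S := by
      rw [Matrix.mul_sub S, Matrix.sub_mul, e2, hBdef, smul_sub]
      abel
    rw [e]
    have p1 : ((dA : ℂ) • (1 - Q)).PosSemidef := by
      have := psd_smul hQ'psd (Nat.cast_nonneg (α := ℝ) dA)
      simpa using this
    have p2 : (S * ((dA : ℂ) • Y - ρ) * S).PosSemidef := by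
      have := hKey.conjTranspose_mul_mul_same S
      rwa [hSh] at this
    exact p1.add p2
  obtain ⟨R, hRh, hRR⟩ : ∃ R : Matrix (Fin dA × Fin dD) (Fin dA × Fin dD) ℂ,
      Rᴴ = R ∧ R * R = B :=
    psd_herm_sqrt hBpsd
  have hBB : (dA : ℂ) • B - B * B = R * ((dA : ℂ) • 1 - B) * R := by
    have e : R * ((dA : ℂ) • 1 - B) * R = (dA : ℂ) • (R * R) - R * B * R := by
      rw [Matrix.mul_sub, Matrix.sub_mul, Matrix.mul_smul, Matrix.mul_one, Matrix.smul_mul]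
    rw [e, hRR]
    congr 1
    rw [← hRR]
    simp only [Matrix.mul_assoc]
  have h5 : 0 ≤ (Y * ((dA : ℂ) • B - B * B)).trace := by
    refine trace_mul_nonneg hYpsd ?_
    rw [hBB]
    have := hBle.conjTranspose_mul_mul_same R
    rwa [hRh] at this
  have h6 : (Y * B).trace = 1 := by
    have e1 : Y * B = (Y * S * ρ) * S := by rw [hBdef]; simp only [Matrix.mul_assoc]
    rw [e1, Matrix.trace_mul_comm]
    have e2 : S * (Y * S * ρ) = (S * Y * S) * ρ := by simp only [Matrix.mul_assoc]
    rw [e2, hSYS, Matrix.trace_mul_comm, hρQ, hρtr]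
  have hmain : (ρ * ρ * ((1 : Matrix (Fin dA) (Fin dA) ℂ) ⊗ₖ pinvH σ)).trace
      = (Y * (B * B)).trace := by
    rw [← hSS]
    have e1 : ρ * ρ * (S * S) = (ρ * Q * ρ) * (S * S) := by rw [hρQ]
    rw [e1, ← hSYS]
    have e2 : (ρ * (S * Y * S) * ρ) * (S * S) = (ρ * S * Y * S * ρ * S) * S := by
      simp only [Matrix.mul_assoc]
    rw [e2, Matrix.trace_mul_comm]
    have e3 : S * (ρ * S * Y * S * ρ * S) = B * (Y * B) := by
      rw [hBdef]; simp only [Matrix.mul_assoc]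
    rw [e3, Matrix.trace_mul_comm, Matrix.mul_assoc]
  have final : (ρ * ρ * ((1 : Matrix (Fin dA) (Fin dA) ℂ) ⊗ₖ pinvH σ)).trace
      = (dA : ℂ) - (Y * ((dA : ℂ) • B - B * B)).trace := by
    rw [hmain, Matrix.mul_sub, Matrix.mul_smul, Matrix.trace_sub, Matrix.trace_smul, h6,
      smul_eq_mul, mul_one]
    ring
  rw [final]
  have hre : 0 ≤ ((Y * ((dA : ℂ) • B - B * B)).trace).re := by
    simpa using (Complex.le_def.mp h5).1
  simp only [Complex.sub_re, Complex.natCast_re]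
  linarith
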